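/- Fixed-value 4-approximation: for every nondecreasing c : [0,1] → ℝ and every v ∈ ℝ, one has sup_{p ∈ ℝ} (v − p)·x(p) + ∫₀^{x(v)/2} (c(2q) − c(q)) dq ≥ (1/2) · ∫₀^{x(v)} (v − c(q)) dq. -/

import Mathlib

open MeasureTheory Set

/-- The probability that the seller (with cost curve `c` on quantiles in `[0,1]`)
accepts a price `p`: the Lebesgue measure of `{q ∈ [0,1] : c q ≤ p}`. -/
noncomputable def accProb (c : ℝ → ℝ) (p : ℝ) : ℝ :=
  (volume {q : ℝ | q ∈ Icc (0:ℝ) 1 ∧ c q ≤ p}).toReal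

lemma accProb_nonneg (c : ℝ → ℝ) (p : ℝ) : 0 ≤ accProb c p := ENNReal.toReal_nonneg

lemma accProb_vol_le (c : ℝ → ℝ) (p : ℝ) :
    volume {q : ℝ | q ∈ Icc (0:ℝ) 1 ∧ c q ≤ p} ≤ 1 := by
  have h : volume {q : ℝ | q ∈ Icc (0:ℝ) 1 ∧ c q ≤ p} ≤ volume (Icc (0:ℝ) 1) :=
    measure_mono (fun q hq => hq.1)
  simpa [Real.volume_Icc] using h

lemma accProb_le_one (c : ℝ → ℝ) (p : ℝ) : accProb c p ≤ 1 := by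
  have h := accProb_vol_le c p
  have := ENNReal.toReal_mono (by simp) h
  simpa [accProb] using this

theorem stmt13 (c : ℝ → ℝ) (hc : MonotoneOn c (Icc (0:ℝ) 1)) (v : ℝ) :
    (⨆ p : ℝ, (v - p) * accProb c p) +
        (∫ q in (0:ℝ)..(accProb c v / 2), (c (2 * q) - c q)) ≥
      (1 / 2) * ∫ q in (0:ℝ)..(accProb c v), (v - c q) := by
  set f : ℝ → ℝ := fun p => (v - p) * accProb c p with hf
  have hbdd : BddAbove (Set.range f) := by
    refine ⟨max 0 (v - c 0), ?_⟩
    rintro _ ⟨p, rfl⟩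
    by_cases hp : p < c 0
    · have hempty : {q : ℝ | q ∈ Icc (0:ℝ) 1 ∧ c q ≤ p} = ∅ := by
        ext q
        simp only [mem_setOf_eq, mem_empty_iff_false, iff_false, not_and]
        intro hq hcq
        exact absurd (le_trans (hc (by simp) hq hq.1) hcq) (not_le.mpr hp)
      have : accProb c p = 0 := by
        simp only [accProb, hempty, measure_empty, ENNReal.toReal_zero]
      simp [hf, this]
    · push_neg at hp
      by_cases hv : v - p ≤ 0
      · have : f p ≤ 0 :=
          mul_nonpos_iff.mpr (Or.inr ⟨hv, accProb_nonneg c p⟩)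
        exact le_trans this (le_max_left _ _)
      · push_neg at hv
        have h1 : f p ≤ (v - p) * 1 :=
          mul_le_mul_of_nonneg_left (accProb_le_one c p) (le_of_lt hv)
        have h2 : (v - p) * 1 ≤ v - c 0 := by linarith
        exact le_trans (le_trans h1 h2) (le_max_right _ _)
  have hle : ∀ p, f p ≤ ⨆ p, f p := fun p => le_ciSup hbdd p
  have hsup0 : (0:ℝ) ≤ ⨆ p, f p := by
    have := hle v
    simpa [hf] using this
  set x := accProb c v with hx
  have hx0 : 0 ≤ x := accProb_nonneg c v
  have hx1 : x ≤ 1 := accProb_le_one c v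
  rcases eq_or_lt_of_le hx0 with hxz | hxpos
  · rw [← hxz]
    simp only [neg_div, zero_div]
    norm_num
    exact hsup0
  · -- main case
    have hhalf : x / 2 ∈ Icc (0:ℝ) 1 := ⟨by linarith, by linarith⟩
    -- c (x/2) ≤ v
    have hcv : c (x / 2) ≤ v := by
      by_contra h
      push_neg at h
      have hsub : {q : ℝ | q ∈ Icc (0:ℝ) 1 ∧ c q ≤ v} ⊆ Ico (0:ℝ) (x / 2) := by
        intro q hq
        refine ⟨hq.1.1, ?_⟩
        by_contra hq2
        push_neg at hq2
        have := hc hhalf hq.1 hq2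
        linarith [hq.2]
      have hv1 : volume {q : ℝ | q ∈ Icc (0:ℝ) 1 ∧ c q ≤ v} ≤ ENNReal.ofReal (x / 2) := by
        have := measure_mono (μ := volume) hsub
        simpa [Real.volume_Ico] using this
      have := ENNReal.toReal_mono ENNReal.ofReal_ne_top hv1
      rw [ENNReal.toReal_ofReal (by linarith)] at this
      have : x ≤ x / 2 := this
      linarith
    -- x/2 ≤ accProb c (c (x/2))
    have hxp : x / 2 ≤ accProb c (c (x / 2)) := by
      have hsub : Icc (0:ℝ) (x / 2) ⊆ {q : ℝ | q ∈ Icc (0:ℝ) 1 ∧ c q ≤ c (x / 2)} := by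
        intro q hq
        have hq1 : q ∈ Icc (0:ℝ) 1 := ⟨hq.1, le_trans hq.2 hhalf.2⟩
        exact ⟨hq1, hc hq1 hhalf hq.2⟩
      have h1 : ENNReal.ofReal (x / 2) ≤ volume {q : ℝ | q ∈ Icc (0:ℝ) 1 ∧ c q ≤ c (x / 2)} := by
        have := measure_mono (μ := volume) hsub
        simpa [Real.volume_Icc] using this
      have hfin : volume {q : ℝ | q ∈ Icc (0:ℝ) 1 ∧ c q ≤ c (x / 2)} ≠ ⊤ :=
        ne_top_of_le_ne_top (by simp) (accProb_vol_le c (c (x / 2)))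
      have := ENNReal.toReal_mono hfin h1
      rwa [ENNReal.toReal_ofReal (by linarith)] at this
    have hkey : (x / 2) * (v - c (x / 2)) ≤ ⨆ p, f p := by
      refine le_trans ?_ (hle (c (x / 2)))
      have : (x / 2) * (v - c (x / 2)) ≤ accProb c (c (x / 2)) * (v - c (x / 2)) :=
        mul_le_mul_of_nonneg_right hxp (by linarith)
      simpa [hf, mul_comm] using this
    -- integrability
    have hsub1 : Set.uIcc (0:ℝ) x ⊆ Icc (0:ℝ) 1 := by
      rw [Set.uIcc_of_le hx0]; exact Icc_subset_Icc le_rfl hx1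
    have hint3 : IntervalIntegrable c volume 0 x :=
      (hc.mono hsub1).intervalIntegrable
    have hsub2 : Set.uIcc (0:ℝ) (x / 2) ⊆ Icc (0:ℝ) 1 := by
      rw [Set.uIcc_of_le (by linarith : (0:ℝ) ≤ x / 2)]
      exact Icc_subset_Icc le_rfl hhalf.2
    have hint2 : IntervalIntegrable c volume 0 (x / 2) :=
      (hc.mono hsub2).intervalIntegrable
    have hintmid : IntervalIntegrable c volume (x / 2) x := by
      have hsub : Set.uIcc (x / 2) x ⊆ Icc (0:ℝ) 1 := by
        rw [Set.uIcc_of_le (by linarith : x / 2 ≤ x)]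
        exact Icc_subset_Icc hhalf.1 hx1
      exact (hc.mono hsub).intervalIntegrable
    have hmono1 : MonotoneOn (fun q => c (2 * q)) (Set.uIcc (0:ℝ) (x / 2)) := by
      rw [Set.uIcc_of_le (by linarith : (0:ℝ) ≤ x / 2)]
      intro a ha b hb hab
      have ha' : 2 * a ∈ Icc (0:ℝ) 1 := ⟨by linarith [ha.1], by linarith [ha.2]⟩
      have hb' : 2 * b ∈ Icc (0:ℝ) 1 := ⟨by linarith [hb.1], by linarith [hb.2]⟩
      exact hc ha' hb' (by linarith)
    have hint1 : IntervalIntegrable (fun q => c (2 * q)) volume 0 (x / 2) :=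
      hmono1.intervalIntegrable
    -- change of variables
    have hcov : (2:ℝ) * ∫ q in (0:ℝ)..(x / 2), c (2 * q) = ∫ q in (0:ℝ)..x, c q := by
      have := intervalIntegral.mul_integral_comp_mul_left (a := (0:ℝ)) (b := x / 2)
        (c := (2:ℝ)) (f := c)
      rw [this, show (2:ℝ) * 0 = 0 by ring, show (2:ℝ) * (x / 2) = x by ring]
    -- split integral
    have hsplit : (∫ q in (0:ℝ)..(x / 2), c q) + (∫ q in (x / 2)..x, c q)
        = ∫ q in (0:ℝ)..x, c q :=
      intervalIntegral.integral_add_adjacent_intervals hint2 hintmid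
    -- lower bound on middle integral
    have hmid : (x - x / 2) * c (x / 2) ≤ ∫ q in (x / 2)..x, c q := by
      have h1 : ∫ q in (x / 2)..x, c (x / 2) ≤ ∫ q in (x / 2)..x, c q := by
        apply intervalIntegral.integral_mono_on (by linarith) intervalIntegrable_const hintmid
        intro q hq
        exact hc hhalf ⟨le_trans hhalf.1 hq.1, le_trans hq.2 hx1⟩ hq.1
      simpa [smul_eq_mul] using h1
    -- expand integrals in the goal
    have hIsub : ∫ q in (0:ℝ)..(x / 2), (c (2 * q) - c q)
        = (∫ q in (0:ℝ)..(x / 2), c (2 * q)) - ∫ q in (0:ℝ)..(x / 2), c q :=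
      intervalIntegral.integral_sub hint1 hint2
    have hVsub : ∫ q in (0:ℝ)..x, (v - c q)
        = x * v - ∫ q in (0:ℝ)..x, c q := by
      rw [intervalIntegral.integral_sub intervalIntegrable_const hint3]
      simp [smul_eq_mul, mul_comm]
    rw [hIsub, hVsub]
    nlinarith [hkey, hcov, hsplit, hmid]
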